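/- The functions H = (1/4)z₁ + (1/4)z₂ + (1/2)(x₁x₂ + y₁y₂) and J = z₁ + 2z₂ on S² × S² Poisson-commute with respect to the Poisson structure ω ⊕ 2ω, where ω is the standard area form on the unit sphere; equivalently, in terms of the Poisson brackets {xᵢ, yᵢ} = cᵢ zᵢ, {yᵢ, zᵢ} = cᵢ xᵢ, {zᵢ, xᵢ} = cᵢ yᵢ with c₁ = 1, c₂ = 1/2 (and brackets between coordinates of different factors vanishing), one has {H, J} = 0. -/
import Mathlib

open Real

lemma deriv_hmul_const (c x : ℝ) : deriv (HMul.hMul c) x = c := by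
  simpa using ((hasDerivAt_id x).const_mul c).deriv

/-- The Hamiltonian H = (1/4)z₁ + (1/4)z₂ + (1/2)(x₁x₂ + y₁y₂) on S² × S². -/
noncomputable def Ham (x₁ y₁ z₁ x₂ y₂ z₂ : ℝ) : ℝ :=
  (1/4) * z₁ + (1/4) * z₂ + (1/2) * (x₁ * x₂ + y₁ * y₂)

/-- The momentum J = z₁ + 2z₂ of the circle action on S² × S². -/
noncomputable def Mom (x₁ y₁ z₁ x₂ y₂ z₂ : ℝ) : ℝ := z₁ + 2 * z₂

/-- H and J Poisson-commute: with the brackets {xᵢ,yᵢ} = cᵢzᵢ, {yᵢ,zᵢ} = cᵢxᵢ,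
{zᵢ,xᵢ} = cᵢyᵢ (c₁ = 1, c₂ = 1/2, brackets between different factors vanishing),
the Poisson bracket {H, J}, expanded by bilinearity and Leibniz in terms of the
partial derivatives of H and J, vanishes at every point. -/
theorem Ham_Mom_poisson_commute (x₁ y₁ z₁ x₂ y₂ z₂ : ℝ) :
    let c₁ : ℝ := 1
    let c₂ : ℝ := 1/2
    let Hx₁ := deriv (fun t => Ham t y₁ z₁ x₂ y₂ z₂) x₁
    let Hy₁ := deriv (fun t => Ham x₁ t z₁ x₂ y₂ z₂) y₁
    let Hz₁ := deriv (fun t => Ham x₁ y₁ t x₂ y₂ z₂) z₁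
    let Hx₂ := deriv (fun t => Ham x₁ y₁ z₁ t y₂ z₂) x₂
    let Hy₂ := deriv (fun t => Ham x₁ y₁ z₁ x₂ t z₂) y₂
    let Hz₂ := deriv (fun t => Ham x₁ y₁ z₁ x₂ y₂ t) z₂
    let Jx₁ := deriv (fun t => Mom t y₁ z₁ x₂ y₂ z₂) x₁
    let Jy₁ := deriv (fun t => Mom x₁ t z₁ x₂ y₂ z₂) y₁
    let Jz₁ := deriv (fun t => Mom x₁ y₁ t x₂ y₂ z₂) z₁
    let Jx₂ := deriv (fun t => Mom x₁ y₁ z₁ t y₂ z₂) x₂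
    let Jy₂ := deriv (fun t => Mom x₁ y₁ z₁ x₂ t z₂) y₂
    let Jz₂ := deriv (fun t => Mom x₁ y₁ z₁ x₂ y₂ t) z₂
    c₁ * (z₁ * (Hx₁ * Jy₁ - Hy₁ * Jx₁) + x₁ * (Hy₁ * Jz₁ - Hz₁ * Jy₁)
        + y₁ * (Hz₁ * Jx₁ - Hx₁ * Jz₁))
      + c₂ * (z₂ * (Hx₂ * Jy₂ - Hy₂ * Jx₂) + x₂ * (Hy₂ * Jz₂ - Hz₂ * Jy₂)
        + y₂ * (Hz₂ * Jx₂ - Hx₂ * Jz₂)) = 0 := by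
  simp only [Ham, Mom]
  norm_num [deriv_add, deriv_mul, deriv_const_mul, deriv_const_mul_field, deriv_hmul_const]
  ring
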